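/- For the shallow water equations with splitting F_E(Q) = (0, v⊗q, 0) where q = Hv, the Jacobian of F_E·n with respect to Q = (η, q, b) (with H = η − b) has eigenvalues λ1 = λ2 = 0, λ3 = v·n, λ4 = 2v·n. -/

import Mathlib

open Polynomial

/-- The explicit convective flux `F_E(Q)·n = (0, v⊗q·n, 0)` of the shallow water
flux splitting, for the state `Q = (η, q₁, q₂, b)`, with `H = η − b` and `v = q/H`. -/
noncomputable def sweExplicitFlux (n : Fin 2 → ℝ) (Q : Fin 4 → ℝ) : Fin 4 → ℝ :=
  ![0, Q 1 * ((Q 1 * n 0 + Q 2 * n 1) / (Q 0 - Q 3)),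
       Q 2 * ((Q 1 * n 0 + Q 2 * n 1) / (Q 0 - Q 3)), 0]

/-- The Jacobian matrix of `F_E·n` with respect to `Q = (η, q₁, q₂, b)`. -/
noncomputable def sweJacobian (n : Fin 2 → ℝ) (Q0 : Fin 4 → ℝ) : Matrix (Fin 4) (Fin 4) ℝ :=
  Matrix.of fun i j => fderiv ℝ (fun Q => sweExplicitFlux n Q i) Q0 (Pi.single j 1)

noncomputable def sweProj (k : Fin 4) : (Fin 4 → ℝ) →L[ℝ] ℝ := ContinuousLinearMap.proj k

lemma swe_row_fderiv (n : Fin 2 → ℝ) (i : Fin 4) (Q0 : Fin 4 → ℝ) (h : Q0 0 - Q0 3 ≠ 0)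
    (e : Fin 4 → ℝ) :
    fderiv ℝ (fun Q : Fin 4 → ℝ => Q i * ((Q 1 * n 0 + Q 2 * n 1) / (Q 0 - Q 3))) Q0 e
      = e i * ((Q0 1 * n 0 + Q0 2 * n 1) / (Q0 0 - Q0 3))
        + Q0 i * ((e 1 * n 0 + e 2 * n 1) / (Q0 0 - Q0 3)
            + (Q0 1 * n 0 + Q0 2 * n 1) * (-((Q0 0 - Q0 3) ^ 2)⁻¹ * (e 0 - e 3))) := by
  have hp : ∀ k : Fin 4, HasFDerivAt (𝕜 := ℝ) (fun Q : Fin 4 → ℝ => Q k) (sweProj k) Q0 :=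
    fun k => hasFDerivAt_apply k Q0
  have hD : HasFDerivAt (fun Q : Fin 4 → ℝ => Q 0 - Q 3) (sweProj 0 - sweProj 3) Q0 :=
    (hp 0).sub (hp 3)
  have hinv : HasFDerivAt (fun Q : Fin 4 → ℝ => (Q 0 - Q 3)⁻¹)
      ((-((Q0 0 - Q0 3) ^ 2)⁻¹) • (sweProj 0 - sweProj 3)) Q0 :=
    (hasDerivAt_inv h).comp_hasFDerivAt Q0 hD
  have hs : HasFDerivAt (fun Q : Fin 4 → ℝ => Q 1 * n 0 + Q 2 * n 1)
      (n 0 • sweProj 1 + n 1 • sweProj 2) Q0 := ((hp 1).mul_const _).add ((hp 2).mul_const _)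
  have hall : HasFDerivAt (fun Q : Fin 4 → ℝ => Q i * ((Q 1 * n 0 + Q 2 * n 1) * (Q 0 - Q 3)⁻¹))
      (Q0 i • ((Q0 1 * n 0 + Q0 2 * n 1) • ((-((Q0 0 - Q0 3) ^ 2)⁻¹) • (sweProj 0 - sweProj 3))
          + (Q0 0 - Q0 3)⁻¹ • (n 0 • sweProj 1 + n 1 • sweProj 2))
        + ((Q0 1 * n 0 + Q0 2 * n 1) * (Q0 0 - Q0 3)⁻¹) • sweProj i) Q0 :=
    (hp i).mul (hs.mul hinv)
  have hall' : HasFDerivAt (fun Q : Fin 4 → ℝ => Q i * ((Q 1 * n 0 + Q 2 * n 1) / (Q 0 - Q 3)))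
      (Q0 i • ((Q0 1 * n 0 + Q0 2 * n 1) • ((-((Q0 0 - Q0 3) ^ 2)⁻¹) • (sweProj 0 - sweProj 3))
          + (Q0 0 - Q0 3)⁻¹ • (n 0 • sweProj 1 + n 1 • sweProj 2))
        + ((Q0 1 * n 0 + Q0 2 * n 1) * (Q0 0 - Q0 3)⁻¹) • sweProj i) Q0 := by
    simpa only [div_eq_mul_inv] using hall
  rw [hall'.fderiv]
  simp only [ContinuousLinearMap.add_apply, ContinuousLinearMap.smul_apply,
    ContinuousLinearMap.sub_apply, sweProj, ContinuousLinearMap.proj_apply, smul_eq_mul,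
    div_eq_mul_inv]
  ring

lemma swe_det_fin_four {R : Type*} [CommRing R] (A : Matrix (Fin 4) (Fin 4) R) :
    A.det = A 0 0 * (A 1 1 * (A 2 2 * A 3 3 - A 2 3 * A 3 2) - A 1 2 * (A 2 1 * A 3 3 - A 2 3 * A 3 1) + A 1 3 * (A 2 1 * A 3 2 - A 2 2 * A 3 1))
      - A 0 1 * (A 1 0 * (A 2 2 * A 3 3 - A 2 3 * A 3 2) - A 1 2 * (A 2 0 * A 3 3 - A 2 3 * A 3 0) + A 1 3 * (A 2 0 * A 3 2 - A 2 2 * A 3 0))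
      + A 0 2 * (A 1 0 * (A 2 1 * A 3 3 - A 2 3 * A 3 1) - A 1 1 * (A 2 0 * A 3 3 - A 2 3 * A 3 0) + A 1 3 * (A 2 0 * A 3 1 - A 2 1 * A 3 0))
      - A 0 3 * (A 1 0 * (A 2 1 * A 3 2 - A 2 2 * A 3 1) - A 1 1 * (A 2 0 * A 3 2 - A 2 2 * A 3 0) + A 1 2 * (A 2 0 * A 3 1 - A 2 1 * A 3 0)) := by
  have h1 : (Fin.succ 2 : Fin 4) = 3 := rfl
  have h2 : (Fin.castSucc 2 : Fin 4) = 2 := rfl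
  have h3 : (1 : Fin 4) < Fin.succ 2 := by decide
  rw [Matrix.det_succ_row_zero]
  simp [Fin.sum_univ_succ, Matrix.det_fin_three, Matrix.submatrix_apply, Fin.succAbove, h1, h2, h3]
  ring

set_option maxHeartbeats 1000000 in
/-- For the shallow water equations with splitting `F_E(Q) = (0, v⊗q, 0)` where
`q = Hv`, the Jacobian of `F_E·n` with respect to `Q = (η, q, b)` (with `H = η − b > 0`)
has eigenvalues `λ₁ = λ₂ = 0`, `λ₃ = v·n`, `λ₄ = 2 v·n`: its characteristic polynomial
is `X² (X − v·n)(X − 2v·n)`. -/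
theorem swe_explicit_eigenvalues (n : Fin 2 → ℝ) (hn : n 0 ^ 2 + n 1 ^ 2 = 1)
    (η b : ℝ) (q v : Fin 2 → ℝ) (hH : 0 < η - b)
    (hv : v = fun i => q i / (η - b)) :
    (sweJacobian n ![η, q 0, q 1, b]).charpoly
      = X ^ 2 * (X - C (v 0 * n 0 + v 1 * n 1)) * (X - C (2 * (v 0 * n 0 + v 1 * n 1))) := by
  have hne : η - b ≠ 0 := ne_of_gt hH
  have hv0 : v 0 = q 0 / (η - b) := by rw [hv]
  have hv1 : v 1 = q 1 / (η - b) := by rw [hv]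
  have hden : (![η, q 0, q 1, b] : Fin 4 → ℝ) 0 - (![η, q 0, q 1, b] : Fin 4 → ℝ) 3 ≠ 0 := by
    simpa using hne
  have e0 : ∀ j : Fin 4, sweJacobian n ![η, q 0, q 1, b] 0 j = 0 := by
    intro j
    show (fderiv ℝ (fun Q => sweExplicitFlux n Q 0) ![η, q 0, q 1, b]) (Pi.single j 1) = 0
    rw [show (fun Q : Fin 4 → ℝ => sweExplicitFlux n Q 0) = fun _ => (0 : ℝ) from
      funext fun Q => by simp [sweExplicitFlux], fderiv_fun_const]
    simp
  have e3 : ∀ j : Fin 4, sweJacobian n ![η, q 0, q 1, b] 3 j = 0 := by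
    intro j
    show (fderiv ℝ (fun Q => sweExplicitFlux n Q 3) ![η, q 0, q 1, b]) (Pi.single j 1) = 0
    rw [show (fun Q : Fin 4 → ℝ => sweExplicitFlux n Q 3) = fun _ => (0 : ℝ) from
      funext fun Q => by simp [sweExplicitFlux], fderiv_fun_const]
    simp
  have e1 : ∀ j : Fin 4, sweJacobian n ![η, q 0, q 1, b] 1 j
      = ![-(v 0 * (v 0 * n 0 + v 1 * n 1)), (v 0 * n 0 + v 1 * n 1) + v 0 * n 0,
          v 0 * n 1, v 0 * (v 0 * n 0 + v 1 * n 1)] j := by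
    intro j
    show (fderiv ℝ (fun Q => sweExplicitFlux n Q 1) ![η, q 0, q 1, b]) (Pi.single j 1) = _
    rw [show (fun Q : Fin 4 → ℝ => sweExplicitFlux n Q 1)
        = fun Q : Fin 4 → ℝ => Q 1 * ((Q 1 * n 0 + Q 2 * n 1) / (Q 0 - Q 3)) from
      funext fun Q => by simp [sweExplicitFlux]]
    rw [swe_row_fderiv n 1 _ hden]
    fin_cases j
    all_goals simp [Pi.single_apply]
    all_goals simp only [hv0, hv1]
    all_goals field_simp
    all_goals try ring
    all_goals tauto
  have e2 : ∀ j : Fin 4, sweJacobian n ![η, q 0, q 1, b] 2 j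
      = ![-(v 1 * (v 0 * n 0 + v 1 * n 1)), v 1 * n 0,
          (v 0 * n 0 + v 1 * n 1) + v 1 * n 1, v 1 * (v 0 * n 0 + v 1 * n 1)] j := by
    intro j
    show (fderiv ℝ (fun Q => sweExplicitFlux n Q 2) ![η, q 0, q 1, b]) (Pi.single j 1) = _
    rw [show (fun Q : Fin 4 → ℝ => sweExplicitFlux n Q 2)
        = fun Q : Fin 4 → ℝ => Q 2 * ((Q 1 * n 0 + Q 2 * n 1) / (Q 0 - Q 3)) from
      funext fun Q => by simp [sweExplicitFlux]]
    rw [swe_row_fderiv n 2 _ hden]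
    fin_cases j
    all_goals simp [Pi.single_apply]
    all_goals simp only [hv0, hv1]
    all_goals field_simp
    all_goals try ring
    all_goals tauto
  rw [Matrix.charpoly, swe_det_fin_four]
  simp only [Matrix.charmatrix_apply, e0, e1, e2, e3]
  simp (config := { decide := true }) [Matrix.diagonal_apply, map_add, map_mul, map_neg, map_sub, map_ofNat]
  ring
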